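/- Let s ≥ 1, β > s, ρ_j > 0 for j = 1,…,s, and let K ≥ s be an integer. Then ∑_{k ∈ ℤ^s, ∑_{j}|k_j| > K} (r_{β,ρ,s}(k))^{1/2} ≤ ( ∏_{j=1}^s max{1, √ρ_j} ) · ∑_{k'=K+1}^{∞} 2^s · C(k'+s−1, s−1) · (k' − s)^{−β}, where C(n, r) denotes the binomial coefficient; in particular the left-hand series converges. -/
import Mathlib

open Real Finset

noncomputable section

/-- One-dimensional weight `r_{β,ρ}(k)`. -/
def rone (β ρ : ℝ) (k : ℤ) : ℝ := if k = 0 then 1 else ρ * |(k : ℝ)| ^ (-(2 * β))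

/-- Multidimensional weight `r_{β,ρ,s}(k) = ∏_j r_{β,ρ_j}(k_j)`. -/
def rmulti {s : ℕ} (β : ℝ) (ρ : Fin s → ℝ) (k : Fin s → ℤ) : ℝ := ∏ j, rone β (ρ j) (k j)

lemma aux_sum_le_prod {ι : Type*} (t : Finset ι) (a : ι → ℕ) :
    ∑ i ∈ t, a i + 1 ≤ ∏ i ∈ t, max (a i) 1 + t.card := by
  induction t using Finset.cons_induction with
  | empty => simp
  | cons i t hi ih =>
    rw [Finset.sum_cons, Finset.prod_cons, Finset.card_cons]
    have h1 : 1 ≤ max (a i) 1 := le_max_right _ _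
    have h2 : 1 ≤ ∏ j ∈ t, max (a j) 1 := Finset.one_le_prod' fun j _ => le_max_right _ _
    have h4 : a i ≤ max (a i) 1 := le_max_left _ _
    obtain ⟨x, hx⟩ := Nat.exists_eq_add_of_le h1
    obtain ⟨y, hy⟩ := Nat.exists_eq_add_of_le h2
    have h3 : max (a i) 1 + ∏ j ∈ t, max (a j) 1 ≤ max (a i) 1 * ∏ j ∈ t, max (a j) 1 + 1 := by
      rw [hx, hy]; nlinarith
    omega

lemma rone_nonneg {β ρ : ℝ} (hρ : 0 ≤ ρ) (k : ℤ) : 0 ≤ rone β ρ k := by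
  unfold rone
  split
  · exact zero_le_one
  · exact mul_nonneg hρ (Real.rpow_nonneg (abs_nonneg _) _)

lemma sqrt_rone_le {β : ℝ} (ρ : ℝ) (hρ : 0 < ρ) (k : ℤ) :
    Real.sqrt (rone β ρ k) ≤ max 1 (Real.sqrt ρ) * ((max k.natAbs 1 : ℕ) : ℝ) ^ (-β) := by
  rcases eq_or_ne k 0 with rfl | hk
  · simp [rone, Real.one_rpow]
  · have hk1 : 1 ≤ k.natAbs := Int.natAbs_pos.2 hk
    have hmax : max k.natAbs 1 = k.natAbs := max_eq_left hk1
    have habs : |(k:ℝ)| = ((k.natAbs : ℕ) : ℝ) := by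
      rw [Nat.cast_natAbs]; exact Int.cast_abs.symm
    have hpos : (0:ℝ) < ((k.natAbs : ℕ) : ℝ) := by exact_mod_cast hk1
    rw [rone, if_neg hk, hmax, habs]
    rw [Real.sqrt_mul hρ.le]
    have h2 : Real.sqrt (((k.natAbs : ℕ) : ℝ) ^ (-(2*β))) = ((k.natAbs : ℕ) : ℝ) ^ (-β) := by
      rw [Real.sqrt_eq_rpow, ← Real.rpow_mul hpos.le]
      congr 1; ring
    rw [h2]
    exact mul_le_mul_of_nonneg_right (le_max_right _ _) (Real.rpow_nonneg hpos.le _)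

lemma sqrt_rmulti_le {s : ℕ} {β : ℝ} (hβ : 0 ≤ β) (ρ : Fin s → ℝ) (hρ : ∀ j, 0 < ρ j)
    (k : Fin s → ℤ) (n : ℕ) (hn : ∑ j, (k j).natAbs = n) (hns : s < n) :
    Real.sqrt (rmulti β ρ k) ≤
      (∏ j, max 1 (Real.sqrt (ρ j))) * ((n : ℝ) - (s : ℝ)) ^ (-β) := by
  have h0 : ∀ j ∈ Finset.univ, (0:ℝ) ≤ rone β (ρ j) (k j) := fun j _ => rone_nonneg (hρ j).le _
  have hsplit : Real.sqrt (rmulti β ρ k) = ∏ j, Real.sqrt (rone β (ρ j) (k j)) := by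
    rw [rmulti, Real.sqrt_eq_rpow, ← Real.finset_prod_rpow _ _ h0]
    exact Finset.prod_congr rfl fun j _ => (Real.sqrt_eq_rpow _).symm
  rw [hsplit]
  have step1 : ∏ j, Real.sqrt (rone β (ρ j) (k j)) ≤
      ∏ j, (max 1 (Real.sqrt (ρ j)) * ((max (k j).natAbs 1 : ℕ) : ℝ) ^ (-β)) :=
    Finset.prod_le_prod (fun j _ => Real.sqrt_nonneg _) (fun j _ => sqrt_rone_le _ (hρ j) _)
  refine step1.trans ?_
  rw [Finset.prod_mul_distrib]
  refine mul_le_mul_of_nonneg_left ?_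
    (Finset.prod_nonneg fun j _ => le_trans zero_le_one (le_max_left _ _))
  have hM : ∀ j ∈ Finset.univ, (0:ℝ) ≤ ((max (k j).natAbs 1 : ℕ) : ℝ) := fun j _ => Nat.cast_nonneg _
  rw [Real.finset_prod_rpow _ _ hM, ← Nat.cast_prod]
  have hP : n + 1 ≤ (∏ j, max (k j).natAbs 1) + s := by
    have := aux_sum_le_prod (Finset.univ : Finset (Fin s)) (fun j => (k j).natAbs)
    simpa [hn] using this
  have hlt : (0:ℝ) < (n : ℝ) - (s : ℝ) := by
    have : (s:ℝ) < (n:ℝ) := by exact_mod_cast hns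
    linarith
  have hle : (n : ℝ) - (s : ℝ) ≤ ((∏ j, max (k j).natAbs 1 : ℕ) : ℝ) := by
    have : (n : ℝ) + 1 ≤ ((∏ j, max (k j).natAbs 1 : ℕ) : ℝ) + (s : ℝ) := by exact_mod_cast hP
    linarith
  exact Real.rpow_le_rpow_of_nonpos hlt hle (neg_nonpos.mpr hβ)

lemma card_finset_sum {ι α : Type*} (t : Finset ι) (f : ι → Multiset α) :
    Multiset.card (∑ i ∈ t, f i) = ∑ i ∈ t, Multiset.card (f i) := by
  induction t using Finset.cons_induction with
  | empty => simp
  | cons i t hi ih => simp [Finset.sum_cons, ih]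

def phiFun (s n : ℕ) (k : {k : Fin s → ℤ // ∑ j, (k j).natAbs = n}) :
    (Fin s → Bool) × Sym (Fin s) n :=
  ⟨fun j => decide (k.1 j < 0),
    ⟨∑ j, Multiset.replicate ((k.1 j).natAbs) j, by
      rw [card_finset_sum]
      simpa [Multiset.card_replicate] using k.2⟩⟩

lemma count_phi {s n : ℕ} (k : {k : Fin s → ℤ // ∑ j, (k j).natAbs = n}) (j : Fin s) :
    Multiset.count j (∑ i, Multiset.replicate ((k.1 i).natAbs) i) = (k.1 j).natAbs := by
  classical
  rw [Multiset.count_sum']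
  rw [Finset.sum_eq_single j]
  · simp [Multiset.count_replicate]
  · intro i _ hij
    simp [Multiset.count_replicate, hij]
  · simp

lemma phi_inj (s n : ℕ) : Function.Injective (phiFun s n) := by
  rintro ⟨k, hk⟩ ⟨k', hk'⟩ h
  have h1 : ∀ j, decide (k j < 0) = decide (k' j < 0) :=
    fun j => congrFun (congrArg Prod.fst h) j
  have h2 : (⟨k, hk⟩ : {k : Fin s → ℤ // ∑ j, (k j).natAbs = n}).1 = k := rfl
  have hm : (∑ j, Multiset.replicate ((k j).natAbs) j : Multiset (Fin s)) =
      ∑ j, Multiset.replicate ((k' j).natAbs) j := by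
    have := congrArg Prod.snd h
    exact Subtype.ext_iff.mp this
  refine Subtype.ext (funext fun j => ?_)
  show k j = k' j
  have hc : (k j).natAbs = (k' j).natAbs := by
    have := congrArg (Multiset.count j) hm
    rwa [count_phi ⟨k, hk⟩ j, count_phi ⟨k', hk'⟩ j] at this
  have hb : (k j < 0) ↔ (k' j < 0) := by
    have := h1 j
    simpa [decide_eq_decide] using this
  omega

instance fiberFinite (s n : ℕ) : Finite {k : Fin s → ℤ // ∑ j, (k j).natAbs = n} :=
  Finite.of_injective _ (phi_inj s n)

lemma fiber_card_le (s n : ℕ) (hs : 1 ≤ s) :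
    Nat.card {k : Fin s → ℤ // ∑ j, (k j).natAbs = n} ≤
      2 ^ s * Nat.choose (n + s - 1) (s - 1) := by
  classical
  calc Nat.card {k : Fin s → ℤ // ∑ j, (k j).natAbs = n}
      ≤ Nat.card ((Fin s → Bool) × Sym (Fin s) n) :=
        Nat.card_le_card_of_injective _ (phi_inj s n)
    _ = 2 ^ s * Nat.choose (n + s - 1) (s - 1) := by
        rw [Nat.card_prod, Nat.card_eq_fintype_card, Nat.card_eq_fintype_card,
          Sym.card_sym_eq_choose]
        have hb : Fintype.card (Fin s → Bool) = 2 ^ s := by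
          simp [Fintype.card_fun]
        rw [hb, Fintype.card_fin]
        congr 1
        have h1 : s + n - 1 = n + s - 1 := by omega
        rw [h1, ← Nat.choose_symm (show n ≤ n + s - 1 by omega)]
        congr 1
        omega

lemma bound_summable (s K : ℕ) (hs : 1 ≤ s) (hK : s ≤ K) (β : ℝ) (hβ : (s : ℝ) < β) :
    Summable (fun m : ℕ => (2 : ℝ) ^ s * (Nat.choose (K + 1 + m + s - 1) (s - 1) : ℝ) *
      (((K : ℝ) + 1 + (m : ℝ)) - (s : ℝ)) ^ (-β)) := by
  have hs1 : (1:ℝ) ≤ (s:ℝ) := by exact_mod_cast hs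
  have hβ0 : 0 < β := lt_of_le_of_lt hs1 hβ |>.trans_le le_rfl |> fun h => lt_of_le_of_lt (le_trans zero_le_one hs1) hβ
  have hc : ((s : ℝ) - 1) - β < -1 := by linarith
  have hmaj : Summable (fun m : ℕ =>
      (2 : ℝ) ^ s * ((K + s : ℕ) : ℝ) ^ (s - 1) * (((m + 1 : ℕ) : ℝ)) ^ (((s : ℝ) - 1) - β)) := by
    apply Summable.mul_left
    exact (Real.summable_nat_rpow.mpr hc).comp_injective Nat.succ_injective
  refine Summable.of_nonneg_of_le (fun m => ?_) (fun m => ?_) hmaj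
  · have hbase : (0:ℝ) ≤ ((K : ℝ) + 1 + (m : ℝ)) - (s : ℝ) := by
      have : (s:ℝ) ≤ (K:ℝ) := by exact_mod_cast hK
      linarith
    positivity
  · set A : ℝ := ((m + 1 : ℕ) : ℝ) with hA_def
    have hA : (0:ℝ) < A := by positivity
    have hsK : (s:ℝ) ≤ (K:ℝ) := by exact_mod_cast hK
    have hbase : (0:ℝ) < ((K : ℝ) + 1 + (m : ℝ)) - (s : ℝ) := by linarith
    set B : ℝ := ((K + s : ℕ) : ℝ) with hB_def
    have e1 : A ^ (((s : ℝ) - 1) - β) = A ^ (s - 1 : ℕ) * A ^ (-β) := by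
      rw [← Real.rpow_natCast A (s - 1), ← Real.rpow_add hA]
      congr 1
      rw [Nat.cast_sub hs]
      push_cast
      ring
    rw [e1]
    have h1 : (Nat.choose (K + 1 + m + s - 1) (s - 1) : ℝ) ≤ B ^ (s - 1) * A ^ (s - 1) := by
      have hnat : Nat.choose (K + 1 + m + s - 1) (s - 1) ≤ ((K + s) * (m + 1)) ^ (s - 1) := by
        calc Nat.choose (K + 1 + m + s - 1) (s - 1) ≤ (K + 1 + m + s - 1) ^ (s - 1) :=
              Nat.choose_le_pow _ _
          _ ≤ ((K + s) * (m + 1)) ^ (s - 1) := by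
              apply Nat.pow_le_pow_left
              have h2 : m ≤ (K + s) * m := Nat.le_mul_of_pos_left m (by omega)
              have h3 : (K + s) * (m + 1) = (K + s) + (K + s) * m := by ring
              omega
      calc (Nat.choose (K + 1 + m + s - 1) (s - 1) : ℝ)
          ≤ ((((K + s) * (m + 1)) ^ (s - 1) : ℕ) : ℝ) := by exact_mod_cast hnat
        _ = B ^ (s - 1) * A ^ (s - 1) := by rw [hB_def, hA_def]; push_cast [mul_pow]; ring
    have h2 : (((K : ℝ) + 1 + (m : ℝ)) - (s : ℝ)) ^ (-β) ≤ A ^ (-β) := by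
      apply Real.rpow_le_rpow_of_nonpos hA _ (neg_nonpos.mpr hβ0.le)
      have : A = (m : ℝ) + 1 := by push_cast [hA_def]; ring
      rw [this]; linarith
    calc (2 : ℝ) ^ s * (Nat.choose (K + 1 + m + s - 1) (s - 1) : ℝ) *
        (((K : ℝ) + 1 + (m : ℝ)) - (s : ℝ)) ^ (-β)
        ≤ (2 : ℝ) ^ s * (B ^ (s - 1) * A ^ (s - 1)) * A ^ (-β) := by
          apply mul_le_mul _ h2 (Real.rpow_nonneg hbase.le _) (by positivity)
          exact mul_le_mul_of_nonneg_left h1 (by positivity)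
      _ = (2 : ℝ) ^ s * B ^ (s - 1) * (A ^ (s - 1) * A ^ (-β)) := by ring

set_option maxHeartbeats 1600000 in
/-- for `β > s` and `K ≥ s`,
`∑_{k ∈ ℤ^s, ∑_j |k_j| > K} (r_{β,ρ,s}(k))^{1/2}
  ≤ (∏_j max{1, √ρ_j}) · ∑_{k'=K+1}^∞ 2^s C(k'+s−1, s−1) (k'−s)^{−β}`,
and in particular the left-hand series converges. -/
theorem stmt7 (s : ℕ) (hs : 1 ≤ s) (β : ℝ) (hβ : (s : ℝ) < β) (ρ : Fin s → ℝ)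
    (hρ : ∀ j, 0 < ρ j) (K : ℕ) (hK : s ≤ K) :
    Summable (fun k : {k : Fin s → ℤ // K < ∑ j, (k j).natAbs} =>
      Real.sqrt (rmulti β ρ k.1)) ∧
    ∑' k : {k : Fin s → ℤ // K < ∑ j, (k j).natAbs}, Real.sqrt (rmulti β ρ k.1) ≤
      (∏ j, max 1 (Real.sqrt (ρ j))) *
        ∑' m : ℕ, (2 : ℝ) ^ s * (Nat.choose (K + 1 + m + s - 1) (s - 1) : ℝ) *
          (((K : ℝ) + 1 + (m : ℝ)) - (s : ℝ)) ^ (-β) := by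
  classical
  have hs1 : (1:ℝ) ≤ (s:ℝ) := by exact_mod_cast hs
  have hβ0 : (0:ℝ) < β := by linarith
  have hsK : (s:ℝ) ≤ (K:ℝ) := by exact_mod_cast hK
  set C : ℝ := ∏ j, max 1 (Real.sqrt (ρ j)) with hC
  have hC0 : 0 ≤ C := Finset.prod_nonneg fun j _ => le_trans zero_le_one (le_max_left _ _)
  set b : ℕ → ℝ := fun m => (2 : ℝ) ^ s * (Nat.choose (K + 1 + m + s - 1) (s - 1) : ℝ) *
    (((K : ℝ) + 1 + (m : ℝ)) - (s : ℝ)) ^ (-β) with hb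
  let e : {k : Fin s → ℤ // K < ∑ j, (k j).natAbs} ≃
      Σ m : ℕ, {k : Fin s → ℤ // ∑ j, (k j).natAbs = K + 1 + m} :=
    { toFun := fun k => ⟨(∑ j, (k.1 j).natAbs) - (K + 1), ⟨k.1, by have := k.2; omega⟩⟩
      invFun := fun p => ⟨p.2.1, by have := p.2.2; omega⟩
      left_inv := fun k => Subtype.ext rfl
      right_inv := fun p => by
        obtain ⟨m, k, hk⟩ := p
        have h : (∑ j, (k j).natAbs) - (K + 1) = m := by omega
        subst h
        rfl }
  set g : (Σ m : ℕ, {k : Fin s → ℤ // ∑ j, (k j).natAbs = K + 1 + m}) → ℝ :=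
    fun p => Real.sqrt (rmulti β ρ p.2.1) with hg
  have hg0 : ∀ p, 0 ≤ g p := fun p => Real.sqrt_nonneg _
  have hBsum := bound_summable s K hs hK β hβ
  have hfib : ∀ m : ℕ,
      ∑' k : {k : Fin s → ℤ // ∑ j, (k j).natAbs = K + 1 + m}, g ⟨m, k⟩ ≤ C * b m := by
    intro m
    haveI := Fintype.ofFinite {k : Fin s → ℤ // ∑ j, (k j).natAbs = K + 1 + m}
    set D : ℝ := (((K : ℝ) + 1 + (m : ℝ)) - (s : ℝ)) ^ (-β) with hD
    have hD0 : 0 ≤ D := Real.rpow_nonneg (by linarith) _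
    have hpt : ∀ k : {k : Fin s → ℤ // ∑ j, (k j).natAbs = K + 1 + m},
        g ⟨m, k⟩ ≤ C * D := by
      intro k
      have h := sqrt_rmulti_le hβ0.le ρ hρ k.1 (K + 1 + m) k.2 (by omega)
      have hcast : ((K + 1 + m : ℕ) : ℝ) - (s : ℝ) = ((K : ℝ) + 1 + (m : ℝ)) - (s : ℝ) := by
        push_cast; ring
      rw [hcast] at h
      exact h
    rw [tsum_fintype]
    have hcard : (Fintype.card {k : Fin s → ℤ // ∑ j, (k j).natAbs = K + 1 + m} : ℝ) ≤
        ((2 ^ s * Nat.choose (K + 1 + m + s - 1) (s - 1) : ℕ) : ℝ) := by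
      have h := fiber_card_le s (K + 1 + m) hs
      rw [Nat.card_eq_fintype_card] at h
      exact_mod_cast h
    calc ∑ k, g ⟨m, k⟩
        ≤ Fintype.card {k : Fin s → ℤ // ∑ j, (k j).natAbs = K + 1 + m} • (C * D) :=
          Finset.sum_le_card_nsmul _ _ _ (fun k _ => hpt k)
      _ = (Fintype.card {k : Fin s → ℤ // ∑ j, (k j).natAbs = K + 1 + m} : ℝ) * (C * D) := by
          rw [nsmul_eq_mul]
      _ ≤ ((2 ^ s * Nat.choose (K + 1 + m + s - 1) (s - 1) : ℕ) : ℝ) * (C * D) :=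
          mul_le_mul_of_nonneg_right hcard (mul_nonneg hC0 hD0)
      _ = C * b m := by rw [hb]; push_cast; ring
  have hfibsum_each : ∀ m, Summable (fun k : {k : Fin s → ℤ // ∑ j, (k j).natAbs = K + 1 + m} =>
      g ⟨m, k⟩) := fun m => Summable.of_finite
  have hsum_outer : Summable (fun m =>
      ∑' k : {k : Fin s → ℤ // ∑ j, (k j).natAbs = K + 1 + m}, g ⟨m, k⟩) :=
    Summable.of_nonneg_of_le (fun m => tsum_nonneg fun k => hg0 _) hfib (hBsum.mul_left C)
  have hgsum : Summable g := (summable_sigma_of_nonneg hg0).mpr ⟨hfibsum_each, hsum_outer⟩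
  have hfsum : Summable (fun k : {k : Fin s → ℤ // K < ∑ j, (k j).natAbs} =>
      Real.sqrt (rmulti β ρ k.1)) := e.summable_iff.mpr hgsum
  refine ⟨hfsum, ?_⟩
  have ht1 : ∑' k : {k : Fin s → ℤ // K < ∑ j, (k j).natAbs}, Real.sqrt (rmulti β ρ k.1) =
      ∑' p, g p := e.tsum_eq g
  rw [ht1, Summable.tsum_sigma' hfibsum_each hgsum]
  calc ∑' m, ∑' k : {k : Fin s → ℤ // ∑ j, (k j).natAbs = K + 1 + m}, g ⟨m, k⟩
      ≤ ∑' m, C * b m := Summable.tsum_le_tsum hfib hsum_outer (hBsum.mul_left C)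
    _ = C * ∑' m, b m := tsum_mul_left

end
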